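/- Let g, ω ∈ ℝ with 1 < ω², 2√g − 1 < ω², and ω² < g (in particular g > 1). Then every complex root z of the polynomial z⁴ + (ω² − 1) z² + (g − ω²) is purely imaginary (Re z = 0) and nonzero, and the polynomial has exactly four distinct complex roots. -/
import Mathlib


/-- Region 4 of the parameter space of the non-local harmonic oscillator: for
max{1, 2√g−1} < ω² < g, all roots of z⁴ + (ω²−1)z² + (g−ω²) are purely imaginary,
nonzero, and there are exactly four distinct roots. -/
theorem stmt6 (g ω : ℝ) (h1 : 1 < ω ^ 2) (h2 : 2 * Real.sqrt g - 1 < ω ^ 2)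
    (h3 : ω ^ 2 < g) :
    (∀ z : ℂ, z ^ 4 + ((ω : ℂ) ^ 2 - 1) * z ^ 2 + ((g : ℂ) - (ω : ℂ) ^ 2) = 0 →
      z.re = 0 ∧ z ≠ 0) ∧
    {z : ℂ | z ^ 4 + ((ω : ℂ) ^ 2 - 1) * z ^ 2 + ((g : ℂ) - (ω : ℂ) ^ 2) = 0}.ncard = 4 := by
  have hg1 : (1:ℝ) < g := lt_trans h1 h3
  have hg0 : (0:ℝ) ≤ g := by linarith
  set a : ℝ := ω ^ 2 - 1 with ha
  set c : ℝ := g - ω ^ 2 with hc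
  have ha0 : 0 < a := by simp only [ha]; linarith
  have hc0 : 0 < c := by simp only [hc]; linarith
  have hsq : Real.sqrt g ^ 2 = g := Real.sq_sqrt hg0
  have hΔ : 0 < a ^ 2 - 4 * c := by
    have hsn : 0 ≤ Real.sqrt g := Real.sqrt_nonneg g
    nlinarith [sq_nonneg (ω ^ 2 + 1 - 2 * Real.sqrt g)]
  set s : ℝ := Real.sqrt (a ^ 2 - 4 * c) with hs
  have hs2 : s ^ 2 = a ^ 2 - 4 * c := Real.sq_sqrt hΔ.le
  have hs0 : 0 < s := Real.sqrt_pos.mpr hΔ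
  have hsa : s < a := by nlinarith
  set r₁ : ℝ := Real.sqrt ((a - s) / 2) with hr1
  set r₂ : ℝ := Real.sqrt ((a + s) / 2) with hr2
  have h1pos : 0 < (a - s) / 2 := by linarith
  have h2pos : 0 < (a + s) / 2 := by linarith
  have hr1sq : r₁ ^ 2 = (a - s) / 2 := Real.sq_sqrt h1pos.le
  have hr2sq : r₂ ^ 2 = (a + s) / 2 := Real.sq_sqrt h2pos.le
  have hr1pos : 0 < r₁ := Real.sqrt_pos.mpr h1pos
  have hr2pos : 0 < r₂ := Real.sqrt_pos.mpr h2pos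
  have hrne : r₁ ≠ r₂ := by
    intro h
    rw [h] at hr1sq
    nlinarith
  have hsum : r₁ ^ 2 + r₂ ^ 2 = a := by rw [hr1sq, hr2sq]; ring
  have hprod : r₁ ^ 2 * r₂ ^ 2 = c := by
    rw [hr1sq, hr2sq]; nlinarith
  have e1 : ((ω : ℂ) ^ 2 - 1) = ((r₁ : ℂ) ^ 2 + (r₂ : ℂ) ^ 2) := by
    have : a = r₁ ^ 2 + r₂ ^ 2 := hsum.symm
    rw [ha] at this
    exact_mod_cast congrArg (fun x : ℝ => (x : ℂ)) this
  have e2 : ((g : ℂ) - (ω : ℂ) ^ 2) = ((r₁ : ℂ) ^ 2 * (r₂ : ℂ) ^ 2) := by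
    have : c = r₁ ^ 2 * r₂ ^ 2 := hprod.symm
    rw [hc] at this
    exact_mod_cast congrArg (fun x : ℝ => (x : ℂ)) this
  have key : ∀ z : ℂ, (z ^ 4 + ((ω : ℂ) ^ 2 - 1) * z ^ 2 + ((g : ℂ) - (ω : ℂ) ^ 2) = 0 ↔
      (z = (r₁ : ℂ) * Complex.I ∨ z = -((r₁ : ℂ) * Complex.I) ∨
       z = (r₂ : ℂ) * Complex.I ∨ z = -((r₂ : ℂ) * Complex.I))) := by
    intro z
    have fact : z ^ 4 + ((ω : ℂ) ^ 2 - 1) * z ^ 2 + ((g : ℂ) - (ω : ℂ) ^ 2) =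
        (z - (r₁ : ℂ) * Complex.I) * (z + (r₁ : ℂ) * Complex.I) *
        ((z - (r₂ : ℂ) * Complex.I) * (z + (r₂ : ℂ) * Complex.I)) := by
      rw [e1, e2]
      linear_combination (((r₁ : ℂ) ^ 2 + (r₂ : ℂ) ^ 2) * z ^ 2 +
        (r₁ : ℂ) ^ 2 * (r₂ : ℂ) ^ 2 * (1 - Complex.I ^ 2)) * Complex.I_sq
    rw [fact]
    simp [mul_eq_zero, sub_eq_zero, add_eq_zero_iff_eq_neg, or_assoc]
  have hIm1 : ((r₁ : ℂ) * Complex.I) ≠ 0 :=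
    mul_ne_zero (by exact_mod_cast hr1pos.ne') Complex.I_ne_zero
  have hIm2 : ((r₂ : ℂ) * Complex.I) ≠ 0 :=
    mul_ne_zero (by exact_mod_cast hr2pos.ne') Complex.I_ne_zero
  constructor
  · intro z hz
    rcases (key z).1 hz with h | h | h | h <;> subst h <;>
      constructor <;> simp [hIm1, hIm2]
  · have hset : {z : ℂ | z ^ 4 + ((ω : ℂ) ^ 2 - 1) * z ^ 2 + ((g : ℂ) - (ω : ℂ) ^ 2) = 0}
        = {(r₁ : ℂ) * Complex.I, -((r₁ : ℂ) * Complex.I),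
           (r₂ : ℂ) * Complex.I, -((r₂ : ℂ) * Complex.I)} := by
      ext z
      simp only [Set.mem_setOf_eq, key z, Set.mem_insert_iff, Set.mem_singleton_iff]
    rw [hset]
    have d12 : (r₁ : ℂ) * Complex.I ≠ -((r₁ : ℂ) * Complex.I) := by
      simp [Complex.ext_iff]; intro h; linarith
    have d13 : (r₁ : ℂ) * Complex.I ≠ (r₂ : ℂ) * Complex.I := by
      simp [Complex.ext_iff]; intro h; exact absurd h hrne
    have d14 : (r₁ : ℂ) * Complex.I ≠ -((r₂ : ℂ) * Complex.I) := by
      simp [Complex.ext_iff]; intro h; linarith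
    have d23 : -((r₁ : ℂ) * Complex.I) ≠ (r₂ : ℂ) * Complex.I := by
      simp [Complex.ext_iff]; intro h; linarith
    have d24 : -((r₁ : ℂ) * Complex.I) ≠ -((r₂ : ℂ) * Complex.I) := by
      simp [Complex.ext_iff]; intro h; exact hrne (by linarith)
    have d34 : (r₂ : ℂ) * Complex.I ≠ -((r₂ : ℂ) * Complex.I) := by
      simp [Complex.ext_iff]; intro h; linarith
    rw [Set.ncard_insert_of_notMem (by simp [d12, d13, d14]),
        Set.ncard_insert_of_notMem (by simp [d23, d24]),
        Set.ncard_insert_of_notMem (by simp [d34]),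
        Set.ncard_singleton]
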